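/- Let M be a k×k Hermitian positive semidefinite complex matrix, D ∈ ℂ^k, and let p ≥ 0 and λ ≥ 1 be reals. Then (1/λ) · D† (p M + I)^{-1} D ≤ D† (λ p M + I)^{-1} D ≤ D† (p M + I)^{-1} D, where all three quantities are nonnegative reals. -/

import Mathlib

open Matrix ComplexOrder

lemma quad_form_resolvent_eq (k : ℕ) (M : Matrix (Fin k) (Fin k) ℂ)
    (hM : M.PosSemidef) (D : Fin k → ℂ) (c : ℝ) (hc : 0 ≤ c) :
    star D ⬝ᵥ ((c : ℂ) • M + 1)⁻¹ *ᵥ D =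
      ((∑ i, (c * hM.1.eigenvalues i + 1)⁻¹ *
        Complex.normSq ((star (hM.1.eigenvectorUnitary : Matrix (Fin k) (Fin k) ℂ) *ᵥ D) i)
        : ℝ) : ℂ) := by
  set U : Matrix (Fin k) (Fin k) ℂ := (hM.1.eigenvectorUnitary : Matrix (Fin k) (Fin k) ℂ)
    with hU
  set d : Fin k → ℝ := hM.1.eigenvalues with hd
  have hUU : U * star U = 1 :=
    Matrix.mem_unitaryGroup_iff.mp hM.1.eigenvectorUnitary.2
  have hsUU : star U * U = 1 :=
    Matrix.mem_unitaryGroup_iff'.mp hM.1.eigenvectorUnitary.2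
  have hpos : ∀ i, (0 : ℝ) < c * d i + 1 := fun i => by
    have := hM.eigenvalues_nonneg i
    nlinarith
  have h1 : (c : ℂ) • M + 1 = U * diagonal (fun i => ((c * d i + 1 : ℝ) : ℂ)) * star U := by
    have hdiag : diagonal (fun i => ((c * d i + 1 : ℝ) : ℂ))
        = (c : ℂ) • diagonal (RCLike.ofReal ∘ d) + 1 := by
      ext i j
      rcases eq_or_ne i j with h | h
      · subst h
        simp [diagonal_apply_eq, one_apply_eq]
      · simp [diagonal_apply_ne _ h, one_apply_ne h]
    rw [hdiag, mul_add, add_mul, mul_one, hUU, mul_smul_comm, smul_mul_assoc]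
    congr 1
    conv_lhs => rw [hM.1.spectral_theorem, Unitary.conjStarAlgAut_apply]
  have h2 : ((c : ℂ) • M + 1)⁻¹
      = U * diagonal (fun i => (((c * d i + 1)⁻¹ : ℝ) : ℂ)) * star U := by
    apply inv_eq_right_inv
    rw [h1]
    simp only [Matrix.mul_assoc]
    rw [← Matrix.mul_assoc (star U) U, hsUU, one_mul,
      ← Matrix.mul_assoc (diagonal _) (diagonal _), diagonal_mul_diagonal]
    have : (fun i => ((c * d i + 1 : ℝ) : ℂ) * (((c * d i + 1)⁻¹ : ℝ) : ℂ))
        = fun _ => (1 : ℂ) := by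
      funext i
      rw [← Complex.ofReal_mul, mul_inv_cancel₀ (hpos i).ne']
      simp
    rw [this, diagonal_one, one_mul, hUU]
  rw [h2]
  have hmv : (U * diagonal (fun i => (((c * d i + 1)⁻¹ : ℝ) : ℂ)) * star U) *ᵥ D
      = U *ᵥ (diagonal (fun i => (((c * d i + 1)⁻¹ : ℝ) : ℂ)) *ᵥ (star U *ᵥ D)) := by
    rw [mulVec_mulVec, mulVec_mulVec, mul_assoc]
  rw [hmv, dotProduct_mulVec]
  have hsy : star D ᵥ* U = star (star U *ᵥ D) := by
    rw [star_mulVec, star_eq_conjTranspose, conjTranspose_conjTranspose]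
  rw [hsy]
  set y : Fin k → ℂ := star U *ᵥ D with hy
  push_cast
  rw [dotProduct]
  refine Finset.sum_congr rfl fun i _ => ?_
  rw [mulVec_diagonal]
  simp only [Pi.star_apply]
  rw [mul_comm (star (y i)), mul_assoc]
  congr 1
  rw [Complex.star_def, Complex.mul_conj]

/-- Let `M` be a `k × k` Hermitian positive semidefinite complex matrix, `D ∈ ℂ^k`, `p ≥ 0`
and `λ ≥ 1`.  Then `(1/λ) D† (p M + I)⁻¹ D ≤ D† (λ p M + I)⁻¹ D ≤ D† (p M + I)⁻¹ D`, all
three quantities being nonnegative reals. -/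
theorem quadratic_form_resolvent_scaling (k : ℕ) (M : Matrix (Fin k) (Fin k) ℂ)
    (hM : M.PosSemidef) (D : Fin k → ℂ) (p l : ℝ) (hp : 0 ≤ p) (hl : 1 ≤ l) :
    (star D ⬝ᵥ ((p : ℂ) • M + 1)⁻¹ *ᵥ D).im = 0 ∧
    (star D ⬝ᵥ (((l * p : ℝ) : ℂ) • M + 1)⁻¹ *ᵥ D).im = 0 ∧
    0 ≤ (star D ⬝ᵥ ((p : ℂ) • M + 1)⁻¹ *ᵥ D).re ∧
    0 ≤ (star D ⬝ᵥ (((l * p : ℝ) : ℂ) • M + 1)⁻¹ *ᵥ D).re ∧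
    (1 / l) * (star D ⬝ᵥ ((p : ℂ) • M + 1)⁻¹ *ᵥ D).re
      ≤ (star D ⬝ᵥ (((l * p : ℝ) : ℂ) • M + 1)⁻¹ *ᵥ D).re ∧
    (star D ⬝ᵥ (((l * p : ℝ) : ℂ) • M + 1)⁻¹ *ᵥ D).re
      ≤ (star D ⬝ᵥ ((p : ℂ) • M + 1)⁻¹ *ᵥ D).re := by
  have hl0 : 0 < l := lt_of_lt_of_le one_pos hl
  have hlp : 0 ≤ l * p := mul_nonneg hl0.le hp
  have e1 := quad_form_resolvent_eq k M hM D p hp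
  have e2 := quad_form_resolvent_eq k M hM D (l * p) hlp
  set d : Fin k → ℝ := hM.1.eigenvalues with hd
  set y : Fin k → ℂ := star (hM.1.eigenvectorUnitary : Matrix (Fin k) (Fin k) ℂ) *ᵥ D
  have hdn : ∀ i, 0 ≤ d i := fun i => hM.eigenvalues_nonneg i
  have hpos : ∀ i, (0 : ℝ) < p * d i + 1 := fun i => by nlinarith [hdn i]
  have hpos' : ∀ i, (0 : ℝ) < l * p * d i + 1 := fun i => by nlinarith [hdn i]
  rw [e1, e2]
  simp only [Complex.ofReal_im, Complex.ofReal_re]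
  refine ⟨trivial, trivial, ?_, ?_, ?_, ?_⟩
  · exact Finset.sum_nonneg fun i _ =>
      mul_nonneg (inv_nonneg.mpr (hpos i).le) (Complex.normSq_nonneg _)
  · exact Finset.sum_nonneg fun i _ =>
      mul_nonneg (inv_nonneg.mpr (hpos' i).le) (Complex.normSq_nonneg _)
  · rw [Finset.mul_sum]
    refine Finset.sum_le_sum fun i _ => ?_
    have h1 : 1 / l * (p * d i + 1)⁻¹ ≤ (l * p * d i + 1)⁻¹ := by
      rw [one_div, ← mul_inv]
      apply inv_anti₀ (hpos' i)
      nlinarith [hdn i, hp, mul_nonneg hp (hdn i)]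
    rw [← mul_assoc]
    exact mul_le_mul_of_nonneg_right h1 (Complex.normSq_nonneg _)
  · refine Finset.sum_le_sum fun i _ => ?_
    have h1 : (l * p * d i + 1)⁻¹ ≤ (p * d i + 1)⁻¹ := by
      apply inv_anti₀ (hpos i)
      nlinarith [hdn i, hp, mul_nonneg hp (hdn i)]
    exact mul_le_mul_of_nonneg_right h1 (Complex.normSq_nonneg _)
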